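/- Let 𝒳, 𝒜 be nonempty finite types, p_X a probability mass function on 𝒳, and f : (0, ∞) → ℝ a convex function with f(1) = 0. For a strictly positive channel p_{A|X} from 𝒳 to 𝒜, define the f-leakage L_f(p_{A|X}) = inf { Σ_{x,a} p_X(x) q(a) f(p_{A|X}(a|x)/q(a)) : q a strictly positive probability mass function on 𝒜 }. Then L_f is convex on the set of strictly positive channels: L_f(λ p + (1−λ) p') ≤ λ L_f(p) + (1−λ) L_f(p') for all strictly positive channels p, p' and λ ∈ [0,1]. -/

import Mathlib

open Finset Real

/-- A probability mass function on a finite type. -/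
def IsPMF {Z : Type*} [Fintype Z] (p : Z → ℝ) : Prop :=
  (∀ z, 0 ≤ p z) ∧ ∑ z, p z = 1

/-- A channel from `X` to `A`: a family of pmfs on `A` indexed by `X`. -/
def IsChannel {X A : Type*} [Fintype X] [Fintype A] (W : X → A → ℝ) : Prop :=
  ∀ x, IsPMF (W x)

/-- Expected loss `Σ_{x,a} p_X(x) p_{A|X}(a|x) ℓ(x,a)`. -/
noncomputable def expLoss {X A : Type*} [Fintype X] [Fintype A]
    (pX : X → ℝ) (ℓ : X → A → ℝ) (W : X → A → ℝ) : ℝ :=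
  ∑ x, ∑ a, pX x * W x a * ℓ x a

/-- The `f`-leakage `L_f(p_{A|X}) = inf_{q>0} D_f(p_X p_{A|X} ‖ p_X q)`. -/
noncomputable def fLeakage {X A : Type*} [Fintype X] [Fintype A]
    (pX : X → ℝ) (f : ℝ → ℝ) (W : X → A → ℝ) : ℝ :=
  sInf {v : ℝ | ∃ q : A → ℝ, IsPMF q ∧ (∀ a, 0 < q a) ∧
    v = ∑ x, ∑ a, pX x * q a * f (W x a / q a)}

/-- Convexity of the perspective of a convex function. -/
lemma perspective_le {f : ℝ → ℝ} (hf : ConvexOn ℝ (Set.Ioi (0 : ℝ)) f)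
    {w w' q q' t : ℝ} (hw : 0 < w) (hw' : 0 < w') (hq : 0 < q) (hq' : 0 < q')
    (ht0 : 0 ≤ t) (ht1 : t ≤ 1) :
    (t * q + (1 - t) * q') * f ((t * w + (1 - t) * w') / (t * q + (1 - t) * q'))
      ≤ t * q * f (w / q) + (1 - t) * q' * f (w' / q') := by
  have ht1' : (0:ℝ) ≤ 1 - t := by linarith
  have hQ : 0 < t * q + (1 - t) * q' := by
    rcases ht0.eq_or_lt with h | h
    · simpa [← h] using hq'
    · have := mul_pos h hq
      nlinarith [mul_nonneg ht1' hq'.le]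
  set Q := t * q + (1 - t) * q' with hQdef
  have ha : (0:ℝ) ≤ t * q / Q := by positivity
  have hb : (0:ℝ) ≤ (1 - t) * q' / Q := by positivity
  have hab : t * q / Q + (1 - t) * q' / Q = 1 := by
    field_simp
    exact hQdef.symm
  have key := hf.2 (Set.mem_Ioi.mpr (div_pos hw hq)) (Set.mem_Ioi.mpr (div_pos hw' hq'))
    ha hb hab
  have harg : (t * q / Q) • (w / q) + ((1 - t) * q' / Q) • (w' / q')
      = (t * w + (1 - t) * w') / Q := by
    simp only [smul_eq_mul]
    field_simp
  rw [harg] at key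
  simp only [smul_eq_mul] at key
  have := mul_le_mul_of_nonneg_left key hQ.le
  calc Q * f ((t * w + (1 - t) * w') / Q)
      ≤ Q * (t * q / Q * f (w / q) + (1 - t) * q' / Q * f (w' / q')) := this
    _ = t * q * f (w / q) + (1 - t) * q' * f (w' / q') := by
        field_simp

/-- Jensen: each candidate value of the infimum is nonnegative. -/
lemma val_nonneg {X A : Type*} [Fintype X] [Fintype A]
    {pX : X → ℝ} (hpX : IsPMF pX)
    {f : ℝ → ℝ} (hf : ConvexOn ℝ (Set.Ioi (0 : ℝ)) f) (hf1 : f 1 = 0)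
    {W : X → A → ℝ} (hW : IsChannel W) (hWpos : ∀ x a, 0 < W x a)
    {q : A → ℝ} (hq : IsPMF q) (hqpos : ∀ a, 0 < q a) :
    0 ≤ ∑ x, ∑ a, pX x * q a * f (W x a / q a) := by
  have h1 : ∑ z : X × A, (pX z.1 * q z.2) • (W z.1 z.2 / q z.2) = 1 := by
    rw [Fintype.sum_prod_type]
    have : ∀ x : X, ∑ a : A, (pX x * q a) • (W x a / q a) = pX x := by
      intro x
      have : ∀ a : A, (pX x * q a) • (W x a / q a) = pX x * W x a := by
        intro a
        have := (hqpos a).ne'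
        rw [smul_eq_mul]
        field_simp
      rw [Finset.sum_congr rfl fun a _ => this a, ← Finset.mul_sum, (hW x).2, mul_one]
    rw [Finset.sum_congr rfl fun x _ => this x, hpX.2]
  have h2 : ∑ z : X × A, pX z.1 * q z.2 = 1 := by
    rw [Fintype.sum_prod_type]
    simp only [← Finset.mul_sum]
    rw [Finset.sum_congr rfl fun x _ => by rw [hq.2, mul_one], hpX.2]
  have key := hf.map_sum_le (t := Finset.univ) (w := fun z : X × A => pX z.1 * q z.2)
    (p := fun z : X × A => W z.1 z.2 / q z.2)
    (fun z _ => mul_nonneg (hpX.1 z.1) (hq.1 z.2)) h2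
    (fun z _ => Set.mem_Ioi.mpr (div_pos (hWpos z.1 z.2) (hqpos z.2)))
  rw [h1, hf1] at key
  calc (0:ℝ) ≤ ∑ z : X × A, (pX z.1 * q z.2) • f (W z.1 z.2 / q z.2) := key
    _ = ∑ x, ∑ a, pX x * q a * f (W x a / q a) := by
        rw [Fintype.sum_prod_type]; simp [smul_eq_mul]

theorem fLeakage_convex
    {X A : Type*} [Fintype X] [Fintype A] [Nonempty X] [Nonempty A]
    (pX : X → ℝ) (hpX : IsPMF pX)
    (f : ℝ → ℝ) (hf : ConvexOn ℝ (Set.Ioi (0 : ℝ)) f) (hf1 : f 1 = 0)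
    (p p' : X → A → ℝ)
    (hp : IsChannel p) (hppos : ∀ x a, 0 < p x a)
    (hp' : IsChannel p') (hp'pos : ∀ x a, 0 < p' x a)
    (t : ℝ) (ht0 : 0 ≤ t) (ht1 : t ≤ 1) :
    fLeakage pX f (fun x a => t * p x a + (1 - t) * p' x a)
      ≤ t * fLeakage pX f p + (1 - t) * fLeakage pX f p' := by
  have ht1' : (0:ℝ) ≤ 1 - t := by linarith
  set W : X → A → ℝ := fun x a => t * p x a + (1 - t) * p' x a with hWdef
  have hWpos : ∀ x a, 0 < W x a := by
    intro x a
    rcases ht0.eq_or_lt with h | h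
    · simpa [hWdef, ← h] using hp'pos x a
    · have := mul_pos h (hppos x a)
      have := mul_nonneg ht1' (hp'pos x a).le
      simp only [hWdef]; nlinarith
  have hWch : IsChannel W := by
    intro x
    constructor
    · intro a; exact (hWpos x a).le
    · simp only [hWdef, Finset.sum_add_distrib, ← Finset.mul_sum, (hp x).2, (hp' x).2]
      ring
  set S : Set ℝ := {v : ℝ | ∃ q : A → ℝ, IsPMF q ∧ (∀ a, 0 < q a) ∧
    v = ∑ x, ∑ a, pX x * q a * f (W x a / q a)} with hSdef
  set S₁ : Set ℝ := {v : ℝ | ∃ q : A → ℝ, IsPMF q ∧ (∀ a, 0 < q a) ∧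
    v = ∑ x, ∑ a, pX x * q a * f (p x a / q a)} with hS1def
  set S₂ : Set ℝ := {v : ℝ | ∃ q : A → ℝ, IsPMF q ∧ (∀ a, 0 < q a) ∧
    v = ∑ x, ∑ a, pX x * q a * f (p' x a / q a)} with hS2def
  -- uniform pmf
  have hcard : (0:ℝ) < (Fintype.card A : ℝ) := by
    exact_mod_cast Fintype.card_pos
  have hunif : IsPMF (fun _ : A => (Fintype.card A : ℝ)⁻¹) ∧
      ∀ a : A, 0 < (Fintype.card A : ℝ)⁻¹ := by
    refine ⟨⟨fun _ => by positivity, ?_⟩, fun _ => by positivity⟩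
    simp [Finset.card_univ, mul_comm]
  have hS1ne : S₁.Nonempty :=
    ⟨_, ⟨_, hunif.1, hunif.2, rfl⟩⟩
  have hS2ne : S₂.Nonempty :=
    ⟨_, ⟨_, hunif.1, hunif.2, rfl⟩⟩
  have hSbdd : BddBelow S := by
    refine ⟨0, fun v hv => ?_⟩
    obtain ⟨q, hq, hqpos, rfl⟩ := hv
    exact val_nonneg hpX hf hf1 hWch hWpos hq hqpos
  -- key: sInf S ≤ t v₁ + (1-t) v₂ for v₁ ∈ S₁, v₂ ∈ S₂
  have hkey : ∀ v₁ ∈ S₁, ∀ v₂ ∈ S₂, sInf S ≤ t * v₁ + (1 - t) * v₂ := by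
    rintro v₁ ⟨q₁, hq₁, hq₁pos, rfl⟩ v₂ ⟨q₂, hq₂, hq₂pos, rfl⟩
    set q : A → ℝ := fun a => t * q₁ a + (1 - t) * q₂ a with hqdef
    have hqpos : ∀ a, 0 < q a := by
      intro a
      rcases ht0.eq_or_lt with h | h
      · simpa [hqdef, ← h] using hq₂pos a
      · have := mul_pos h (hq₁pos a)
        have := mul_nonneg ht1' (hq₂pos a).le
        simp only [hqdef]; nlinarith
    have hq : IsPMF q := by
      constructor
      · intro a; exact (hqpos a).le
      · simp only [hqdef, Finset.sum_add_distrib, ← Finset.mul_sum, hq₁.2, hq₂.2]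
        ring
    have hmem : (∑ x, ∑ a, pX x * q a * f (W x a / q a)) ∈ S :=
      ⟨q, hq, hqpos, rfl⟩
    refine le_trans (csInf_le hSbdd hmem) ?_
    have hle : ∀ x, ∀ a : A, pX x * q a * f (W x a / q a)
        ≤ t * (pX x * q₁ a * f (p x a / q₁ a)) + (1 - t) * (pX x * q₂ a * f (p' x a / q₂ a)) := by
      intro x a
      have hpersp := perspective_le hf (hppos x a) (hp'pos x a) (hq₁pos a) (hq₂pos a) ht0 ht1
      have := mul_le_mul_of_nonneg_left hpersp (hpX.1 x)
      calc pX x * q a * f (W x a / q a)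
          = pX x * ((t * q₁ a + (1 - t) * q₂ a) *
              f ((t * p x a + (1 - t) * p' x a) / (t * q₁ a + (1 - t) * q₂ a))) := by
            simp only [hqdef, hWdef]; ring
        _ ≤ pX x * (t * q₁ a * f (p x a / q₁ a) + (1 - t) * q₂ a * f (p' x a / q₂ a)) := this
        _ = t * (pX x * q₁ a * f (p x a / q₁ a)) + (1 - t) * (pX x * q₂ a * f (p' x a / q₂ a)) := by
            ring
    calc (∑ x, ∑ a, pX x * q a * f (W x a / q a))
        ≤ ∑ x, ∑ a, (t * (pX x * q₁ a * f (p x a / q₁ a))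
            + (1 - t) * (pX x * q₂ a * f (p' x a / q₂ a))) := by
          refine Finset.sum_le_sum fun x _ => Finset.sum_le_sum fun a _ => hle x a
      _ = t * (∑ x, ∑ a, pX x * q₁ a * f (p x a / q₁ a))
            + (1 - t) * (∑ x, ∑ a, pX x * q₂ a * f (p' x a / q₂ a)) := by
          simp only [Finset.sum_add_distrib, Finset.mul_sum]
  -- conclude via ε-argument
  show sInf S ≤ t * sInf S₁ + (1 - t) * sInf S₂
  refine le_of_forall_pos_le_add fun ε hε => ?_
  have hε2 : 0 < ε / 2 := by linarith
  obtain ⟨v₁, hv₁, hv₁lt⟩ := Real.lt_sInf_add_pos hS1ne hε2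
  obtain ⟨v₂, hv₂, hv₂lt⟩ := Real.lt_sInf_add_pos hS2ne hε2
  have h1 : t * v₁ ≤ t * (sInf S₁ + ε / 2) :=
    mul_le_mul_of_nonneg_left hv₁lt.le ht0
  have h2 : (1 - t) * v₂ ≤ (1 - t) * (sInf S₂ + ε / 2) :=
    mul_le_mul_of_nonneg_left hv₂lt.le ht1'
  have := hkey v₁ hv₁ v₂ hv₂
  nlinarith [mul_nonneg ht0 hε2.le, mul_nonneg ht1' hε2.le]
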